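/- Let A₁, A₂, A₃ be regular edge sets in a finite directed acyclic graph with source s. If A₁ ≺ A₂ and A₂ ≺ A₃, then A₁ ≺ A₃; i.e., the domination relation ≺ on regular edge sets is transitive. -/

import Mathlib

open Finset

/-- Consecutive edges in the list match head-to-tail. -/
def EChain {V E : Type*} (tl hd : E → V) (p : List E) : Prop :=
  p.Chain' (fun d e => hd d = tl e)

/-- A (nonempty) directed path of edges starting at node `s`. -/
def PathFrom {V E : Type*} (tl hd : E → V) (s : V) (p : List E) : Prop :=
  p ≠ [] ∧ EChain tl hd p ∧ ∀ e ∈ p.head?, tl e = s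

/-- The directed graph is acyclic: no nonempty edge-chain returns to its start. -/
def Acyclic {V E : Type*} (tl hd : E → V) : Prop :=
  ∀ p : List E, p ≠ [] → EChain tl hd p →
    ∀ d ∈ p.head?, ∀ e ∈ p.getLast?, hd e ≠ tl d

/-- `B` separates the edge set `A` from `s`: every directed path from `s`
ending with an edge of `A` passes through an edge of `B` (i.e. `B` is a cut
between `s` and `A`). -/
def Separates {V E : Type*} (tl hd : E → V) (s : V) (A B : Finset E) : Prop :=
  ∀ p : List E, PathFrom tl hd s p → (∃ e ∈ p.getLast?, e ∈ A) → ∃ b ∈ B, b ∈ p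

/-- The minimum cut capacity between `s` and the edge set `A`. -/
noncomputable def mincut {V E : Type*} [Fintype E] (tl hd : E → V) (s : V)
    (A : Finset E) : ℕ :=
  sInf {n | ∃ B : Finset E, Separates tl hd s A B ∧ B.card = n}

/-- `B` is a minimum cut between `s` and the edge set `A`. -/
def IsMinCut {V E : Type*} [Fintype E] (tl hd : E → V) (s : V) (A B : Finset E) : Prop :=
  Separates tl hd s A B ∧ B.card = mincut tl hd s A

/-- An edge set is regular if its cardinality equals its minimum cut capacity from `s`. -/
def Regular {V E : Type*} [Fintype E] (tl hd : E → V) (s : V) (A : Finset E) : Prop :=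
  A.card = mincut tl hd s A

/-- `A ∼ A'`: the two edge sets have a common minimum cut from `s`. -/
def EquivSets {V E : Type*} [Fintype E] (tl hd : E → V) (s : V) (A A' : Finset E) : Prop :=
  ∃ C : Finset E, IsMinCut tl hd s A C ∧ IsMinCut tl hd s A' C

/-- `A₁ ≺ A₂`: `|A₁| < |A₂|` and some minimum cut between `s` and `A₂`
also separates `A₁` from `s`. -/
def Dominates {V E : Type*} [Fintype E] (tl hd : E → V) (s : V) (A₁ A₂ : Finset E) : Prop :=
  A₁.card < A₂.card ∧
    ∃ C : Finset E, IsMinCut tl hd s A₂ C ∧ Separates tl hd s A₁ C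

/-- A directed path of edges from node `s` to node `t`. -/
def NPathFromTo {V E : Type*} (tl hd : E → V) (s t : V) (p : List E) : Prop :=
  PathFrom tl hd s p ∧ ∀ e ∈ p.getLast?, hd e = t

/-- `B` is a cut between the nodes `s` and `t`. -/
def NSeparates {V E : Type*} (tl hd : E → V) (s t : V) (B : Finset E) : Prop :=
  ∀ p : List E, NPathFromTo tl hd s t p → ∃ b ∈ B, b ∈ p

/-- The minimum cut capacity between the nodes `s` and `t`. -/
noncomputable def nmincut {V E : Type*} [Fintype E] (tl hd : E → V) (s t : V) : ℕ :=
  sInf {n | ∃ B : Finset E, NSeparates tl hd s t B ∧ B.card = n}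

/-- `B` is a minimum cut between the nodes `s` and `t`. -/
def IsNodeMinCut {V E : Type*} [Fintype E] (tl hd : E → V) (s t : V) (B : Finset E) : Prop :=
  NSeparates tl hd s t B ∧ B.card = nmincut tl hd s t

/-- `d ≤ e` for edges: there is a directed path starting with `d` and ending with `e`
(in particular `d ≤ d`). -/
def EdgeLe {V E : Type*} (tl hd : E → V) (d e : E) : Prop :=
  ∃ p : List E, EChain tl hd p ∧ p.head? = some d ∧ p.getLast? = some e

/-- A family of pairwise edge-disjoint paths. -/
def EdgeDisjoint {E : Type*} {n : ℕ} (P : Fin n → List E) : Prop :=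
  ∀ i j, i ≠ j → List.Disjoint (P i) (P j)

/-- The primary minimum cut between nodes `s` and `t`: a minimum cut separating
every minimum cut between `s` and `t` from `s`. -/
def IsPrimaryNodeMinCut {V E : Type*} [Fintype E] (tl hd : E → V) (s t : V)
    (C : Finset E) : Prop :=
  IsNodeMinCut tl hd s t C ∧
    ∀ C' : Finset E, IsNodeMinCut tl hd s t C' → Separates tl hd s C' C

/-- The primary minimum cut between `s` and an edge set `A`. -/
def IsPrimaryMinCut {V E : Type*} [Fintype E] (tl hd : E → V) (s : V)
    (A C : Finset E) : Prop :=
  IsMinCut tl hd s A C ∧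
    ∀ C' : Finset E, IsMinCut tl hd s A C' → Separates tl hd s C' C

/-- The equivalence class (within the collection `𝒜`) of the wiretap set `A`
under the relation `∼`. -/
def ClassOf {V E : Type*} [Fintype E] (tl hd : E → V) (s : V)
    (𝒜 : Finset (Finset E)) (A : Finset E) : Set (Finset E) :=
  {A' | A' ∈ 𝒜 ∧ EquivSets tl hd s A A'}

/-- Domination amongst (distinct) equivalence classes: some common minimum cut of all
the sets in `C₂` separates every set in `C₁` from `s`. -/
def ClDominates {V E : Type*} [Fintype E] (tl hd : E → V) (s : V)
    (C₁ C₂ : Set (Finset E)) : Prop :=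
  C₁ ≠ C₂ ∧ ∃ CUT : Finset E,
    (∀ A ∈ C₂, IsMinCut tl hd s A CUT) ∧ (∀ A ∈ C₁, Separates tl hd s A CUT)

section Aux

variable {V E : Type*} (tl hd : E → V) (s : V)

lemma mem_of_getLast?' {α : Type*} {a : α} {l : List α} (h : a ∈ l.getLast?) : a ∈ l := by
  obtain ⟨hne, rfl⟩ := List.mem_getLast?_eq_getLast h
  exact List.getLast_mem hne

lemma split_first {α : Type*} {b : α} : ∀ {p : List α}, b ∈ p →
    ∃ q r, p = q ++ b :: r ∧ b ∉ q := by
  intro p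
  induction p with
  | nil => simp
  | cons x xs ih =>
    intro h
    by_cases hx : b = x
    · exact ⟨[], xs, by simp [hx], by simp⟩
    · obtain ⟨q, r, h1, h2⟩ := ih (by
        rcases List.mem_cons.1 h with h' | h'
        · exact absurd h' hx
        · exact h')
      exact ⟨x :: q, r, by simp [h1], by simp [hx, h2]⟩

lemma split_last {α : Type*} {b : α} : ∀ {p : List α}, b ∈ p →
    ∃ q r, p = q ++ b :: r ∧ b ∉ r := by
  intro p
  induction p with
  | nil => simp
  | cons x xs ih =>
    intro h
    by_cases hx : b ∈ xs
    · obtain ⟨q, r, h1, h2⟩ := ih hx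
      exact ⟨x :: q, r, by simp [h1], h2⟩
    · rcases List.mem_cons.1 h with h' | h'
      · exact ⟨[], xs, by simp [h'], hx⟩
      · exact absurd h' hx

/-- Vertices reachable from `s` by a path avoiding `B`. -/
def Reach (B : Finset E) : Set V :=
  {v | v = s ∨ ∃ p : List E, PathFrom tl hd s p ∧ (∀ e ∈ p, e ∉ B) ∧
    ∃ e ∈ p.getLast?, hd e = v}

lemma s_mem_reach (B : Finset E) : s ∈ Reach tl hd s B := Or.inl rfl

lemma reach_extend {B : Finset E} {a : E} (ha : tl a ∈ Reach tl hd s B) (haB : a ∉ B) :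
    ∃ p, PathFrom tl hd s p ∧ (∀ e ∈ p, e ∉ B) ∧ p.getLast? = some a := by
  rcases ha with h | ⟨p, hp, hpB, e, he, hev⟩
  · exact ⟨[a], ⟨by simp, by simp [EChain, List.Chain'], by simp [h]⟩, by simpa using haB, by simp⟩
  · refine ⟨p ++ [a], ⟨by simp [hp.1], ?_, ?_⟩, ?_, ?_⟩
    · refine List.isChain_append.2 ⟨hp.2.1, by simp [EChain], ?_⟩
      intro x hx y hy
      simp only [List.head?_cons, Option.mem_def, Option.some_inj] at hy
      have : x = e := by
        rw [Option.mem_def] at hx he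
        rw [hx] at he; exact Option.some_inj.1 he
      subst this; subst hy
      exact hev
    · rw [List.head?_append_of_ne_nil _ hp.1]
      exact hp.2.2
    · intro f hf
      rcases List.mem_append.1 hf with h' | h'
      · exact hpB f h'
      · simp at h'; subst h'; exact haB
    · rw [List.getLast?_append_of_ne_nil _ (by simp)]; rfl

lemma mem_of_sep {A B : Finset E} (hsep : Separates tl hd s A B) {a : E} (haA : a ∈ A)
    (ha : tl a ∈ Reach tl hd s B) : a ∈ B := by
  by_contra haB
  obtain ⟨p, hp, hpB, hlast⟩ := reach_extend tl hd s ha haB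
  obtain ⟨b, hbB, hbp⟩ := hsep p hp ⟨a, by rw [hlast]; rfl, haA⟩
  exact hpB b hbp hbB

lemma chain_stay (S : Set V) : ∀ {p : List E}, EChain tl hd p →
    (∀ e ∈ p.head?, tl e ∈ S) → (∀ e ∈ p, tl e ∈ S → hd e ∈ S) →
    ∀ e ∈ p, tl e ∈ S ∧ hd e ∈ S := by
  intro p
  induction p with
  | nil => simp
  | cons e rest ih =>
    intro hchain hhead hstep
    have ht : tl e ∈ S := hhead e rfl
    have hh : hd e ∈ S := hstep e (by simp) ht
    intro f hf
    rcases List.mem_cons.1 hf with rfl | hf'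
    · exact ⟨ht, hh⟩
    · obtain ⟨hlink, hrest⟩ := List.isChain_cons.1 hchain
      exact ih hrest (fun g hg => by rw [← hlink g hg]; exact hh)
        (fun g hg h => hstep g (List.mem_cons_of_mem _ hg) h) f hf'

open Classical in
/-- The cut induced by a vertex set `S` (with target edge set `A`). -/
noncomputable def cutOf [Fintype E] (S : Set V) (A : Finset E) : Finset E :=
  Finset.univ.filter (fun e => tl e ∈ S ∧ (hd e ∉ S ∨ e ∈ A))

lemma mem_cutOf [Fintype E] {S : Set V} {A : Finset E} {e : E} :
    e ∈ cutOf tl hd S A ↔ tl e ∈ S ∧ (hd e ∉ S ∨ e ∈ A) := by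
  classical
  simp [cutOf]

lemma cut_separates [Fintype E] (S : Set V) (hs : s ∈ S) (A : Finset E) :
    Separates tl hd s A (cutOf tl hd S A) := by
  rintro p hp ⟨a, ha, haA⟩
  by_contra hno
  push_neg at hno
  have ham : a ∈ p := mem_of_getLast?' ha
  have hstep : ∀ e ∈ p, tl e ∈ S → hd e ∈ S ∧ e ∉ A := by
    intro e hep hte
    have hec : e ∉ cutOf tl hd S A := fun h => hno e h hep
    rw [mem_cutOf] at hec
    push_neg at hec
    exact hec hte
  have hstay := chain_stay tl hd S hp.2.1
    (fun e he => by rw [hp.2.2 e he]; exact hs)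
    (fun e hep ht => (hstep e hep ht).1)
  exact (hstep a ham (hstay a ham).1).2 haA

lemma cut_subset [Fintype E] {A B : Finset E} (hsep : Separates tl hd s A B) :
    cutOf tl hd (Reach tl hd s B) A ⊆ B := by
  intro e he
  rw [mem_cutOf] at he
  obtain ⟨ht, hcase⟩ := he
  rcases hcase with hhd | heA
  · by_contra heB
    obtain ⟨p, hp, hpB, hlast⟩ := reach_extend tl hd s ht heB
    exact hhd (Or.inr ⟨p, hp, hpB, e, by rw [hlast]; rfl, rfl⟩)
  · exact mem_of_sep tl hd s hsep heA ht

lemma mincut_subset_cut [Fintype E] (hsrc : ∀ e : E, hd e ≠ s) {A B : Finset E}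
    (hB : IsMinCut tl hd s A B) :
    B ⊆ cutOf tl hd (Reach tl hd s B) A := by
  classical
  intro b hb
  rw [mem_cutOf]
  have hpos : 0 < B.card := Finset.card_pos.2 ⟨b, hb⟩
  have herase : ¬ Separates tl hd s A (B.erase b) := by
    intro h
    have hle : mincut tl hd s A ≤ (B.erase b).card := Nat.sInf_le ⟨B.erase b, h, rfl⟩
    rw [Finset.card_erase_of_mem hb, ← hB.2] at hle
    omega
  unfold Separates at herase
  push_neg at herase
  obtain ⟨p, hp, hpA, hav⟩ := herase
  obtain ⟨a, halast, haA⟩ := hpA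
  have hbp : b ∈ p := by
    by_contra hbp
    obtain ⟨b', hb'B, hb'p⟩ := hB.1 p hp ⟨a, halast, haA⟩
    rcases eq_or_ne b' b with rfl | hne
    · exact hbp hb'p
    · exact hav b' (Finset.mem_erase.2 ⟨hne, hb'B⟩) hb'p
  have honly : ∀ e ∈ p, e ∈ B → e = b := by
    intro e hep heB
    by_contra hne
    exact hav e (Finset.mem_erase.2 ⟨hne, heB⟩) hep
  constructor
  · -- tl b ∈ Reach
    obtain ⟨q, r, hpqr, hbq⟩ := split_first hbp
    rcases List.eq_nil_or_concat q with rfl | _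
    · simp only [List.nil_append] at hpqr
      left
      have := hp.2.2 b (by rw [hpqr]; rfl)
      exact this
    · have hqne : q ≠ [] := by rintro rfl; simp_all
      right
      have hchain := hp.2.1
      rw [hpqr] at hchain
      obtain ⟨hcq, hcr, hlink⟩ := List.isChain_append.1 hchain
      refine ⟨q, ⟨hqne, hcq, ?_⟩, ?_, ?_⟩
      · intro e he
        apply hp.2.2
        rw [hpqr, List.head?_append_of_ne_nil _ hqne]
        exact he
      · intro e heq
        intro heB
        have : e = b := honly e (by rw [hpqr]; exact List.mem_append_left _ heq) heB
        exact hbq (this ▸ heq)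
      · obtain ⟨x, hx⟩ := Option.ne_none_iff_exists'.1
          (fun h => hqne (List.getLast?_eq_none_iff.1 h))
        exact ⟨x, hx, hlink x hx b rfl⟩
  · -- hd b ∉ Reach ∨ b ∈ A
    by_cases hbA : b ∈ A
    · exact Or.inr hbA
    left
    intro hhd
    obtain ⟨q, r, hpqr, hbr⟩ := split_last hbp
    have hrne : r ≠ [] := by
      rintro rfl
      have : p.getLast? = some b := by
        rw [hpqr, List.getLast?_append_of_ne_nil _ (by simp)]; rfl
      rw [Option.mem_def, this] at halast
      exact hbA ((Option.some_inj.1 halast) ▸ haA)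
    rcases hhd with hhs | ⟨q', hq', hq'B, e', he'last, he'v⟩
    · exact hsrc b hhs
    -- build q' ++ r
    have hchain := hp.2.1
    rw [hpqr] at hchain
    obtain ⟨hcq, hcbr, _⟩ := List.isChain_append.1 hchain
    obtain ⟨hlinkbr, hcr⟩ := List.isChain_cons.1 hcbr
    have hpath : PathFrom tl hd s (q' ++ r) := by
      refine ⟨by simp [hq'.1], ?_, ?_⟩
      · refine List.isChain_append.2 ⟨hq'.2.1, hcr, ?_⟩
        intro x hx y hy
        have : x = e' := by
          rw [Option.mem_def] at hx he'last
          rw [hx] at he'last; exact Option.some_inj.1 he'last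
        subst this
        rw [he'v]
        exact hlinkbr y hy
      · rw [List.head?_append_of_ne_nil _ hq'.1]
        exact hq'.2.2
    have hlast2 : a ∈ (q' ++ r).getLast? := by
      rw [List.getLast?_append_of_ne_nil _ hrne]
      have hpr : p.getLast? = r.getLast? := by
        rw [hpqr, List.append_cons, List.getLast?_append_of_ne_nil _ hrne]
      rw [← hpr]
      exact halast
    obtain ⟨b'', hb''B, hb''p⟩ := hB.1 (q' ++ r) hpath ⟨a, hlast2, haA⟩
    rcases List.mem_append.1 hb''p with h' | h'
    · exact hq'B b'' h' hb''B
    · have : b'' = b := honly b''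
        (by rw [hpqr]; exact List.mem_append_right _ (List.mem_cons_of_mem _ h')) hb''B
      exact hbr (this ▸ h')

end Aux

theorem dominates_trans' {V E : Type*} [Fintype E] (tl hd : E → V) (s : V)
    (hsrc : ∀ e : E, hd e ≠ s)
    (A₁ A₂ A₃ : Finset E)
    (h12 : Dominates tl hd s A₁ A₂) (h23 : Dominates tl hd s A₂ A₃) :
    Dominates tl hd s A₁ A₃ := by
  classical
  obtain ⟨hc12, C₂, hC₂min, hC₂sep⟩ := h12
  obtain ⟨hc23, C₃, hC₃min, hC₃sep⟩ := h23
  set S₂ : Set V := Reach tl hd s C₂ with hS₂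
  set S₃ : Set V := Reach tl hd s C₃ with hS₃
  set C : Finset E := cutOf tl hd (S₂ ∩ S₃) A₃ with hC
  set D : Finset E := cutOf tl hd (S₂ ∪ S₃) A₂ with hD
  have hs2 : s ∈ S₂ := s_mem_reach tl hd s C₂
  have hs3 : s ∈ S₃ := s_mem_reach tl hd s C₃
  have hCsep : Separates tl hd s A₃ C := cut_separates tl hd s (S₂ ∩ S₃) ⟨hs2, hs3⟩ A₃
  have hDsep : Separates tl hd s A₂ D := cut_separates tl hd s (S₂ ∪ S₃) (Or.inl hs2) A₂
  -- structure of the minimum cuts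
  have hC₂struct : ∀ e ∈ C₂, tl e ∈ S₂ ∧ (hd e ∉ S₂ ∨ e ∈ A₂) := by
    intro e he
    exact (mem_cutOf tl hd).1 (mincut_subset_cut tl hd s hsrc hC₂min he)
  have hC₃struct : ∀ e ∈ C₃, tl e ∈ S₃ ∧ (hd e ∉ S₃ ∨ e ∈ A₃) := by
    intro e he
    exact (mem_cutOf tl hd).1 (mincut_subset_cut tl hd s hsrc hC₃min he)
  have hF : ∀ e : E, e ∈ A₂ → tl e ∈ S₃ → (hd e ∉ S₃ ∨ e ∈ A₃) := by
    intro e he ht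
    exact (hC₃struct e (mem_of_sep tl hd s hC₃sep he ht)).2
  -- counting via inclusion-exclusion
  have hCm : ∀ e : E, e ∈ C ↔ (tl e ∈ S₂ ∧ tl e ∈ S₃) ∧ (¬(hd e ∈ S₂ ∧ hd e ∈ S₃) ∨ e ∈ A₃) := by
    intro e; rw [hC, mem_cutOf]; simp [Set.mem_inter_iff]
  have hDm : ∀ e : E, e ∈ D ↔ (tl e ∈ S₂ ∨ tl e ∈ S₃) ∧ (¬(hd e ∈ S₂ ∨ hd e ∈ S₃) ∨ e ∈ A₂) := by
    intro e; rw [hD, mem_cutOf]; simp [Set.mem_union]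
  have h2m : ∀ e : E, e ∈ cutOf tl hd S₂ A₂ ↔ tl e ∈ S₂ ∧ (hd e ∉ S₂ ∨ e ∈ A₂) :=
    fun e => mem_cutOf tl hd
  have h3m : ∀ e : E, e ∈ cutOf tl hd S₃ A₃ ↔ tl e ∈ S₃ ∧ (hd e ∉ S₃ ∨ e ∈ A₃) :=
    fun e => mem_cutOf tl hd
  have hinter : C ∩ D ⊆ (cutOf tl hd S₂ A₂) ∩ (cutOf tl hd S₃ A₃) := by
    intro e he
    rw [Finset.mem_inter] at he ⊢
    rw [hCm e, hDm e] at he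
    rw [h2m e, h3m e]
    have hFe := hF e
    tauto
  have hunion : C ∪ D ⊆ (cutOf tl hd S₂ A₂) ∪ (cutOf tl hd S₃ A₃) := by
    intro e he
    rw [Finset.mem_union] at he ⊢
    rw [hCm e, hDm e] at he
    rw [h2m e, h3m e]
    have hFe := hF e
    tauto
  have hsum : C.card + D.card ≤ (cutOf tl hd S₂ A₂).card + (cutOf tl hd S₃ A₃).card := by
    rw [← Finset.card_union_add_card_inter C D,
      ← Finset.card_union_add_card_inter (cutOf tl hd S₂ A₂) (cutOf tl hd S₃ A₃)]
    exact Nat.add_le_add (Finset.card_le_card hunion) (Finset.card_le_card hinter)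
  have hsub2 : (cutOf tl hd S₂ A₂).card ≤ C₂.card :=
    Finset.card_le_card (cut_subset tl hd s hC₂min.1)
  have hsub3 : (cutOf tl hd S₃ A₃).card ≤ C₃.card :=
    Finset.card_le_card (cut_subset tl hd s hC₃min.1)
  have hD2 : mincut tl hd s A₂ ≤ D.card := Nat.sInf_le ⟨D, hDsep, rfl⟩
  have hC3 : mincut tl hd s A₃ ≤ C.card := Nat.sInf_le ⟨C, hCsep, rfl⟩
  have hCcard : C.card = mincut tl hd s A₃ := by
    have h2 := hC₂min.2
    have h3 := hC₃min.2
    omega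
  refine ⟨lt_trans hc12 hc23, C, ⟨hCsep, hCcard⟩, ?_⟩
  -- C separates A₁
  rintro p hp ⟨a, halast, haA⟩
  by_contra hno
  push_neg at hno
  have ham : a ∈ p := mem_of_getLast?' halast
  have hstep : ∀ e ∈ p, tl e ∈ S₂ ∩ S₃ → hd e ∈ S₂ ∩ S₃ ∧ e ∉ A₃ := by
    intro e hep hte
    have hec : e ∉ C := fun h => hno e h hep
    rw [hC, mem_cutOf] at hec
    push_neg at hec
    have := hec hte
    exact ⟨this.1, this.2⟩
  have hstay := chain_stay tl hd (S₂ ∩ S₃) hp.2.1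
    (fun e he => by rw [hp.2.2 e he]; exact ⟨hs2, hs3⟩)
    (fun e hep ht => (hstep e hep ht).1)
  obtain ⟨hta, hha⟩ := hstay a ham
  have haC₂ : a ∈ C₂ := mem_of_sep tl hd s hC₂sep haA hta.1
  have haA₂ : a ∈ A₂ := by
    rcases (hC₂struct a haC₂).2 with h | h
    · exact absurd hha.1 h
    · exact h
  have haC₃ : a ∈ C₃ := mem_of_sep tl hd s hC₃sep haA₂ hta.2
  rcases (hC₃struct a haC₃).2 with h | h
  · exact h hha.2
  · exact (hstep a ham hta).2 h

/-- the domination relation `≺` on regular edge sets is transitive. -/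
theorem dominates_trans {V E : Type*} [Fintype E] (tl hd : E → V) (s : V)
    (hacy : Acyclic tl hd) (hsrc : ∀ e : E, hd e ≠ s)
    (A₁ A₂ A₃ : Finset E)
    (h₁ : Regular tl hd s A₁) (h₂ : Regular tl hd s A₂) (h₃ : Regular tl hd s A₃)
    (h12 : Dominates tl hd s A₁ A₂) (h23 : Dominates tl hd s A₂ A₃) :
    Dominates tl hd s A₁ A₃ :=
  dominates_trans' tl hd s hsrc A₁ A₂ A₃ h12 h23
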